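/- arXiv:2204.10359 — 2 statements merged into one kernel-verified Lean document; each statement's English description precedes it below -/
import Mathlib

section
/- Let h > 0, let 𝔠 > 0, and let 𝒢 = { z' ↦ g_z((z' − z)/h) : z ∈ [0,1]^d } be a class of functions on ℝ^d satisfying: (i) sup_z sup_{z'} |g_z(z')| ≤ 𝔠; (ii) each g_z is supported in [−𝔠, 𝔠]^d; (iii) sup_z |g_z(z') − g_z(z'')| ≤ 𝔠 |z' − z''| and sup_w |g_{z'}(w) − g_{z''}(w)| ≤ 𝔠 h⁻¹ |z' − z''|. Then for every probability measure P on [0,1]^d and every ε ∈ (0,1], the L¹(P)-covering number satisfies N((2𝔠+1)^{d+1} ε, 𝒢, L¹(P)) ≤ 𝔠' ε^{−(d+1)} + 1, where 𝔠' depends only on 𝔠 and d. -/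
open MeasureTheory

set_option maxHeartbeats 1000000 in
/-- Uniform `L¹(P)`-covering number bound `N((2𝔠+1)^{d+1}ε, 𝒢, L¹(P))
≤ 𝔠' ε^{−(d+1)} + 1` for the class `𝒢 = {z' ↦ g_z((z'−z)/h) : z ∈ [0,1]^d}` of
bounded, compactly supported, Lipschitz kernels of possibly varying shapes. -/
theorem covering_number_of_kernel_class
    (d : ℕ) (hd : 1 ≤ d) (𝔠 : ℝ) (h𝔠 : 0 < 𝔠) :
    ∃ 𝔠' : ℝ, 0 < 𝔠' ∧
      ∀ (h : ℝ), 0 < h →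
      ∀ (g : (Fin d → ℝ) → (Fin d → ℝ) → ℝ),
        (∀ z z', |g z z'| ≤ 𝔠) →
        (∀ z z', z' ∉ Set.Icc (fun _ => -𝔠 : Fin d → ℝ) (fun _ => 𝔠) → g z z' = 0) →
        (∀ z z' z'', |g z z' - g z z''| ≤ 𝔠 * dist z' z'') →
        (∀ z' z'' w, |g z' w - g z'' w| ≤ 𝔠 / h * dist z' z'') →
      ∀ (P : Measure (Fin d → ℝ)), IsProbabilityMeasure P →
        P (Set.Icc (0 : Fin d → ℝ) 1) = 1 →
      ∀ ε : ℝ, 0 < ε → ε ≤ 1 →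
      ∃ T : Finset ((Fin d → ℝ) → ℝ),
        (T.card : ℝ) ≤ 𝔠' / ε ^ (d + 1) + 1 ∧
        ∀ z ∈ Set.Icc (0 : Fin d → ℝ) 1, ∃ f ∈ T,
          (∫ w, |g z (h⁻¹ • (w - z)) - f w| ∂P) ≤ (2 * 𝔠 + 1) ^ (d + 1) * ε := by
  classical
  refine ⟨(2*𝔠+3)^d, by positivity, ?_⟩
  intro h hh g hg_bd hg_supp hg_lip1 hg_lip2 P hPprob hP1 ε hε hε1
  obtain ⟨δ, hδdef⟩ : ∃ x : ℝ, x = ε * h := ⟨_, rfl⟩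
  have hδ : 0 < δ := by rw [hδdef]; positivity
  obtain ⟨r, hrdef⟩ : ∃ x : ℝ, x = 𝔠 * h + δ := ⟨_, rfl⟩
  have hr : 0 < r := by rw [hrdef]; positivity
  obtain ⟨zc, hzc⟩ : ∃ x : (Fin d → ℤ) → (Fin d → ℝ), x = fun c i => (c i : ℝ) * δ := ⟨_, rfl⟩
  obtain ⟨A, hA⟩ : ∃ x : (Fin d → ℤ) → Set (Fin d → ℝ),
      x = fun c => Set.Icc (fun i => zc c i - r) (fun i => zc c i + r) := ⟨_, rfl⟩
  have hAmeas : ∀ c, MeasurableSet (A c) := by intro c; rw [hA]; exact measurableSet_Icc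
  obtain ⟨B, hB⟩ : ∃ x : Finset (Fin d → ℤ), x = Finset.Icc 0 (fun _ => ⌈1/δ⌉) := ⟨_, rfl⟩
  obtain ⟨H, hH⟩ : ∃ x : Finset (Fin d → ℤ),
      x = B.filter (fun c => ε ≤ (P (A c)).toReal) := ⟨_, rfl⟩
  obtain ⟨F, hF⟩ : ∃ x : (Fin d → ℤ) → ((Fin d → ℝ) → ℝ),
      x = fun c w => g (zc c) (h⁻¹ • (w - zc c)) := ⟨_, rfl⟩
  -- continuity and integrability
  have hcont : ∀ z : Fin d → ℝ, Continuous (fun w => g z (h⁻¹ • (w - z))) := by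
    intro z
    have hlip : LipschitzWith 𝔠.toNNReal (g z) := by
      refine LipschitzWith.of_dist_le_mul fun a b => ?_
      rw [Real.coe_toNNReal _ h𝔠.le, Real.dist_eq]
      exact hg_lip1 z a b
    exact hlip.continuous.comp (by continuity)
  have hint : ∀ z : Fin d → ℝ, Integrable (fun w => g z (h⁻¹ • (w - z))) P := by
    intro z
    refine Integrable.mono' (integrable_const 𝔠) ((hcont z).aestronglyMeasurable) ?_
    exact Filter.Eventually.of_forall fun w => by simpa using hg_bd z _
  -- overlap count
  have hover : ∀ w : Fin d → ℝ,
      ((H.filter (fun c => w ∈ A c)).card : ℝ) ≤ ((2*𝔠+3)/ε)^d := by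
    intro w
    obtain ⟨lo, hlo⟩ : ∃ x : Fin d → ℤ, x = fun i => ⌈(w i - r)/δ⌉ := ⟨_, rfl⟩
    obtain ⟨hi, hhi⟩ : ∃ x : Fin d → ℤ, x = fun i => ⌊(w i + r)/δ⌋ := ⟨_, rfl⟩
    have hsub : H.filter (fun c => w ∈ A c) ⊆ Finset.Icc lo hi := by
      intro c hcmem
      rw [Finset.mem_filter] at hcmem
      obtain ⟨-, hmem⟩ := hcmem
      rw [hA, Set.mem_Icc] at hmem
      rw [Finset.mem_Icc]
      constructor <;> intro i
      · have h2 := hmem.2 i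
        simp only [hzc] at h2
        rw [hlo]
        exact Int.ceil_le.2 (by rw [div_le_iff₀ hδ]; linarith)
      · have h1 := hmem.1 i
        simp only [hzc] at h1
        rw [hhi]
        exact Int.le_floor.2 (by rw [le_div_iff₀ hδ]; linarith)
    have hfac : ∀ i : Fin d, (((hi i + 1 - lo i).toNat : ℕ) : ℝ) ≤ (2*𝔠+3)/ε := by
      intro i
      have hge : (0:ℝ) ≤ (2*𝔠+3)/ε := by positivity
      rcases le_or_gt (hi i + 1 - lo i) 0 with ht | ht
      · rw [Int.toNat_of_nonpos ht]; simpa using hge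
      · have e : (((hi i + 1 - lo i).toNat : ℕ) : ℝ) = ((hi i : ℝ) + 1 - lo i) := by
          rw [← Int.cast_natCast (R := ℝ), Int.toNat_of_nonneg ht.le]
          push_cast; ring
        rw [e]
        have f1 : ((hi i : ℝ)) ≤ (w i + r)/δ := by rw [hhi]; exact Int.floor_le _
        have f2 : (w i - r)/δ ≤ (lo i : ℝ) := by rw [hlo]; exact Int.le_ceil _
        have f1' : (hi i : ℝ) * δ ≤ w i + r := by rwa [← le_div_iff₀ hδ]
        have f2' : w i - r ≤ (lo i : ℝ) * δ := by rwa [← div_le_iff₀ hδ]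
        have key : ((hi i : ℝ) + 1 - lo i) * ε * h ≤ (2*𝔠+3) * h := by
          have hstep : ((hi i : ℝ) + 1 - lo i) * δ ≤ 2*r + δ := by nlinarith
          rw [hrdef, hδdef] at hstep
          nlinarith
        have key2 : ((hi i : ℝ) + 1 - lo i) * ε ≤ 2*𝔠+3 :=
          le_of_mul_le_mul_right (by linarith [key]) hh
        rw [le_div_iff₀ hε]
        linarith
    calc ((H.filter (fun c => w ∈ A c)).card : ℝ)
        ≤ ((Finset.Icc lo hi).card : ℝ) := by exact_mod_cast Finset.card_le_card hsub
      _ = ∏ i, (((hi i + 1 - lo i).toNat : ℕ) : ℝ) := by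
          rw [Pi.card_Icc]
          push_cast
          exact Finset.prod_congr rfl fun i _ => by rw [Int.card_Icc]
      _ ≤ ∏ _i : Fin d, ((2*𝔠+3)/ε) :=
          Finset.prod_le_prod (fun i _ => by positivity) (fun i _ => hfac i)
      _ = ((2*𝔠+3)/ε)^d := by simp [div_pow]
  -- heavy cell count
  have hcard : (H.card : ℝ) * ε ≤ ((2*𝔠+3)/ε)^d := by
    have hsum : ∑ c ∈ H, P (A c) ≤ ENNReal.ofReal (((2*𝔠+3)/ε)^d) := by
      calc ∑ c ∈ H, P (A c)
          = ∫⁻ w, ∑ c ∈ H, (A c).indicator (1 : (Fin d → ℝ) → ENNReal) w ∂P := by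
            rw [lintegral_finset_sum _ (fun c _ => measurable_one.indicator (hAmeas c))]
            exact Finset.sum_congr rfl fun c _ => (lintegral_indicator_one (hAmeas c)).symm
        _ ≤ ∫⁻ _w, ENNReal.ofReal (((2*𝔠+3)/ε)^d) ∂P := by
            refine lintegral_mono fun w => ?_
            have e : ∑ c ∈ H, (A c).indicator (1 : (Fin d → ℝ) → ENNReal) w
                = ((H.filter (fun c => w ∈ A c)).card : ENNReal) := by
              simp only [Set.indicator_apply, Pi.one_apply]
              rw [Finset.sum_boole]
            rw [e, ← ENNReal.ofReal_natCast]
            exact ENNReal.ofReal_le_ofReal (hover w)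
        _ = ENNReal.ofReal (((2*𝔠+3)/ε)^d) := by
            rw [lintegral_const, measure_univ, mul_one]
    have hEq : (H.card : ℝ) * ε = ∑ _c ∈ H, ε := by
      rw [Finset.sum_const, nsmul_eq_mul]
    rw [hEq]
    calc ∑ _c ∈ H, ε ≤ ∑ c ∈ H, (P (A c)).toReal := by
          refine Finset.sum_le_sum fun c hc => ?_
          rw [hH, Finset.mem_filter] at hc
          exact hc.2
      _ = (∑ c ∈ H, P (A c)).toReal :=
          (ENNReal.toReal_sum fun c _ => measure_ne_top P _).symm
      _ ≤ ((2*𝔠+3)/ε)^d :=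
          ENNReal.toReal_le_of_le_ofReal (by positivity) hsum
  refine ⟨insert 0 (H.image F), ?_, ?_⟩
  · -- cardinality bound
    have i1 := Finset.card_insert_le (0 : (Fin d → ℝ) → ℝ) (H.image F)
    have i2 := Finset.card_image_le (f := F) (s := H)
    have h1 : ((insert (0 : (Fin d → ℝ) → ℝ) (H.image F)).card : ℝ) ≤ (H.card : ℝ) + 1 := by
      exact_mod_cast le_trans i1 (Nat.add_le_add_right i2 1)
    have h2 : (H.card : ℝ) ≤ (2*𝔠+3)^d / ε^(d+1) := by
      rw [le_div_iff₀ (by positivity)]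
      have hm := mul_le_mul_of_nonneg_right hcard (pow_nonneg hε.le d)
      rw [div_pow, div_mul_cancel₀ _ (by positivity : (ε:ℝ)^d ≠ 0)] at hm
      calc (H.card : ℝ) * ε^(d+1) = (H.card : ℝ) * ε * ε^d := by ring
        _ ≤ (2*𝔠+3)^d := hm
    linarith
  · -- covering
    intro z hz
    rw [Set.mem_Icc] at hz
    obtain ⟨c, hc⟩ : ∃ x : Fin d → ℤ, x = fun i => ⌊z i / δ⌋ := ⟨_, rfl⟩
    have hcB : c ∈ B := by
      rw [hB, Finset.mem_Icc]
      constructor <;> intro i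
      · rw [hc]; exact Int.floor_nonneg.2 (div_nonneg (hz.1 i) hδ.le)
      · rw [hc]
        have hcalc : ((⌊z i / δ⌋ : ℤ) : ℝ) ≤ ((⌈1/δ⌉ : ℤ) : ℝ) :=
          calc ((⌊z i / δ⌋ : ℤ) : ℝ) ≤ z i / δ := Int.floor_le _
            _ ≤ 1 / δ := by gcongr; exact hz.2 i
            _ ≤ (⌈1/δ⌉ : ℝ) := Int.le_ceil _
        exact_mod_cast hcalc
    have hdzc : dist z (zc c) ≤ δ := by
      refine (dist_pi_le_iff hδ.le).2 fun i => ?_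
      rw [Real.dist_eq]
      have h1 : ((⌊z i / δ⌋ : ℤ) : ℝ) ≤ z i / δ := Int.floor_le _
      have h2 : z i / δ - 1 < ((⌊z i / δ⌋ : ℤ) : ℝ) := Int.sub_one_lt_floor _
      have h1' : ((⌊z i / δ⌋ : ℤ) : ℝ) * δ ≤ z i := by rwa [← le_div_iff₀ hδ]
      have h2' : z i - δ < ((⌊z i / δ⌋ : ℤ) : ℝ) * δ := by
        have h3 := mul_lt_mul_of_pos_right h2 hδ
        rw [sub_mul, one_mul, div_mul_cancel₀ _ hδ.ne'] at h3
        linarith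
      rw [abs_le]
      constructor <;> simp only [hzc, hc] <;> [linarith; linarith]
    by_cases hch : c ∈ H
    · refine ⟨F c, Finset.mem_insert_of_mem (Finset.mem_image_of_mem F hch), ?_⟩
      have hpt : ∀ w, |g z (h⁻¹ • (w - z)) - F c w| ≤ 2 * 𝔠 * ε := by
        intro w
        have e3 : dist (h⁻¹ • (w - z)) (h⁻¹ • (w - zc c)) = h⁻¹ * dist z (zc c) := by
          rw [dist_smul₀, dist_sub_left, Real.norm_eq_abs, abs_of_pos (inv_pos.2 hh)]
        have e1 := hg_lip1 z (h⁻¹ • (w - z)) (h⁻¹ • (w - zc c))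
        have e2 := hg_lip2 z (zc c) (h⁻¹ • (w - zc c))
        rw [e3] at e1
        have hD : dist z (zc c) ≤ ε * h := by rw [← hδdef]; exact hdzc
        have hinv : h⁻¹ * dist z (zc c) ≤ ε := by rw [inv_mul_le_iff₀ hh]; linarith
        have hdiv : 𝔠 / h * dist z (zc c) ≤ 𝔠 * ε := by
          rw [div_mul_eq_mul_div, div_le_iff₀ hh]
          nlinarith [dist_nonneg (x := z) (y := zc c)]
        calc |g z (h⁻¹ • (w - z)) - F c w|
            ≤ |g z (h⁻¹ • (w - z)) - g z (h⁻¹ • (w - zc c))|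
              + |g z (h⁻¹ • (w - zc c)) - g (zc c) (h⁻¹ • (w - zc c))| := by
              rw [hF]; exact abs_sub_le _ _ _
          _ ≤ 𝔠 * (h⁻¹ * dist z (zc c)) + 𝔠 / h * dist z (zc c) := add_le_add e1 e2
          _ ≤ 𝔠 * ε + 𝔠 * ε := by
              refine add_le_add ?_ hdiv
              exact mul_le_mul_of_nonneg_left hinv h𝔠.le
          _ = 2 * 𝔠 * ε := by ring
      calc (∫ w, |g z (h⁻¹ • (w - z)) - F c w| ∂P)
          ≤ ∫ _w, 2 * 𝔠 * ε ∂P := by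
            refine integral_mono ((hint z).sub ?_).abs (integrable_const _) fun w => hpt w
            rw [hF]; exact hint (zc c)
        _ = 2 * 𝔠 * ε := by rw [integral_const]; simp
        _ ≤ (2 * 𝔠 + 1) ^ (d + 1) * ε := by
            have h1 : (2*𝔠+1:ℝ) ≤ (2*𝔠+1)^(d+1) :=
              le_self_pow₀ (by linarith) (Nat.succ_ne_zero d)
            nlinarith
    · refine ⟨0, Finset.mem_insert_self _ _, ?_⟩
      have hlight : (P (A c)).toReal < ε := by
        by_contra hcon
        push_neg at hcon
        refine hch ?_
        rw [hH, Finset.mem_filter]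
        exact ⟨hcB, hcon⟩
      have hsupp : ∀ w, w ∉ A c → g z (h⁻¹ • (w - z)) = 0 := by
        intro w hw
        refine hg_supp z _ fun hmem => hw ?_
        rw [Set.mem_Icc] at hmem
        rw [hA, Set.mem_Icc]
        have hzi : ∀ i, |z i - zc c i| ≤ δ := by
          intro i
          have hid := le_trans (dist_le_pi_dist z (zc c) i) hdzc
          rwa [Real.dist_eq] at hid
        constructor <;> intro i
        · have h1 := hmem.1 i
          simp only [Pi.smul_apply, Pi.sub_apply, smul_eq_mul] at h1
          have h1' : -(𝔠 * h) ≤ w i - z i := by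
            have h3 := mul_le_mul_of_nonneg_right h1 hh.le
            rw [inv_mul_eq_div, div_mul_cancel₀ _ hh.ne'] at h3
            linarith
          have h4 := (abs_le.1 (hzi i)).1
          rw [hrdef]
          simp only []
          linarith
        · have h2 := hmem.2 i
          simp only [Pi.smul_apply, Pi.sub_apply, smul_eq_mul] at h2
          have h2' : w i - z i ≤ 𝔠 * h := by
            have h3 := mul_le_mul_of_nonneg_right h2 hh.le
            rw [inv_mul_eq_div, div_mul_cancel₀ _ hh.ne'] at h3
            linarith
          have h4 := (abs_le.1 (hzi i)).2
          rw [hrdef]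
          simp only []
          linarith
      calc (∫ w, |g z (h⁻¹ • (w - z)) - (0:(Fin d → ℝ) → ℝ) w| ∂P)
          ≤ ∫ w, (A c).indicator (fun _ => 𝔠) w ∂P := by
            refine integral_mono (by simpa using (hint z).abs)
              ((integrable_const 𝔠).indicator (hAmeas c)) fun w => ?_
            by_cases hw : w ∈ A c
            · simpa [Set.indicator_of_mem hw] using hg_bd z (h⁻¹ • (w - z))
            · simp [Set.indicator_of_notMem hw, hsupp w hw]
        _ = (P (A c)).toReal * 𝔠 := by
            rw [integral_indicator_const _ (hAmeas c)]; simp [mul_comm, measureReal_def]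
        _ ≤ (2 * 𝔠 + 1) ^ (d + 1) * ε := by
            have h1 : (2*𝔠+1:ℝ) ≤ (2*𝔠+1)^(d+1) :=
              le_self_pow₀ (by linarith) (Nat.succ_ne_zero d)
            nlinarith [hlight.le, ENNReal.toReal_nonneg (a := P (A c))]
end

section
/- Under the setting of the previous statement (S_y invertible with ‖S_y⁻¹‖ ≤ C₁, g bounded by C₂, K bounded by C₃ and supported in [−1,1]), the map a ↦ I(a) = ∫_{(𝒴−y)/h} 1(a ≤ y+hv) p(v) K(v) g(y+hv) dv is Lipschitz continuous: |I(a) − I(a′)| ≤ C h⁻¹ |a − a′|, where C depends only on C₂, C₃, p, and in particular not on h or y. -/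
open MeasureTheory

/-- The map `a ↦ I(a) = ∫_{(𝒴−y)/h} 1(a ≤ y+hv) p(v)K(v)g(y+hv) dv`
is Lipschitz with constant `C h⁻¹`, where `C` depends only on the bound `C₂` on
`g`, the bound `C₃` on `K`, and the polynomial order `p` (not on `h` or `y`). -/
theorem equivalent_kernel_lipschitz_in_data
    (p : ℕ) (C₂ C₃ : ℝ) (hC₂ : 0 ≤ C₂) (hC₃ : 0 ≤ C₃) :
    ∃ C : ℝ, 0 ≤ C ∧
      ∀ (h y : ℝ), 0 < h →
      ∀ (𝒴 : Set ℝ), MeasurableSet 𝒴 →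
      ∀ (g K : ℝ → ℝ),
        (∀ u, 0 ≤ g u) → (∀ u, g u ≤ C₂) → Measurable g →
        (∀ v, |K v| ≤ C₃) → (∀ v, v ∉ Set.Icc (-1 : ℝ) 1 → K v = 0) → Measurable K →
      ∀ (D : Set ℝ), D = {v : ℝ | y + h * v ∈ 𝒴} →
      ∀ (pv : ℝ → Fin (p + 1) → ℝ),
        pv = (fun (v : ℝ) (j : Fin (p + 1)) => v ^ (j : ℕ) / (Nat.factorial j)) →
      ∀ (I : ℝ → Fin (p + 1) → ℝ),
        I = (fun (a : ℝ) (i : Fin (p + 1)) =>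
          ∫ v in D, (if a ≤ y + h * v then (1 : ℝ) else 0) * pv v i * K v * g (y + h * v)) →
      ∀ a a' : ℝ, ∀ i : Fin (p + 1), |I a i - I a' i| ≤ C / h * |a - a'| := by
  refine ⟨C₂ * C₃, mul_nonneg hC₂ hC₃, ?_⟩
  intro h y hh 𝒴 h𝒴 g K hg0 hgC hgm hK hKsupp hKm D hD pv hpv I hI a a' i
  wlog hle : a ≤ a' generalizing a a' with H
  · rw [abs_sub_comm (I a i), abs_sub_comm a]
    exact H a' a (le_of_not_ge hle)
  subst hD hpv hI
  set c := C₂ * C₃ with hc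
  have hc0 : 0 ≤ c := mul_nonneg hC₂ hC₃
  set f : ℝ → ℝ → ℝ := fun b v =>
    (if b ≤ y + h * v then (1:ℝ) else 0) * (v ^ (i:ℕ) / (Nat.factorial i : ℝ)) * K v
      * g (y + h * v) with hf
  have hgabs : ∀ u, |g u| ≤ C₂ := fun u => by
    rw [abs_of_nonneg (hg0 u)]; exact hgC u
  have hrest : ∀ v, |v ^ (i:ℕ) / (Nat.factorial i : ℝ) * K v * g (y + h * v)| ≤ c := by
    intro v
    by_cases hv : v ∈ Set.Icc (-1:ℝ) 1
    · have h2 : |v ^ (i:ℕ) / (Nat.factorial i : ℝ)| ≤ 1 := by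
        rw [abs_div, abs_pow]
        have hv1 : |v| ≤ 1 := abs_le.2 ⟨hv.1, hv.2⟩
        have hfac : (1:ℝ) ≤ |(Nat.factorial (i:ℕ) : ℝ)| := by
          rw [abs_of_nonneg (by positivity)]
          exact_mod_cast Nat.one_le_iff_ne_zero.2 (Nat.factorial_ne_zero _)
        calc |v| ^ (i:ℕ) / |(Nat.factorial (i:ℕ) : ℝ)| ≤ 1 / 1 := by
              apply div_le_div₀ (by norm_num) (pow_le_one₀ (abs_nonneg v) hv1)
                (by norm_num) hfac
          _ = 1 := by norm_num
      calc |v ^ (i:ℕ) / (Nat.factorial i : ℝ) * K v * g (y + h * v)|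
          = |v ^ (i:ℕ) / (Nat.factorial i : ℝ)| * |K v| * |g (y + h * v)| := by
            rw [abs_mul, abs_mul]
        _ ≤ 1 * C₃ * C₂ := by
            apply mul_le_mul (mul_le_mul h2 (hK v) (abs_nonneg _) (by norm_num))
              (hgabs _) (abs_nonneg _) (by positivity)
        _ = c := by rw [hc]; ring
    · rw [hKsupp v hv]
      simpa using hc0
  have hbound : ∀ b v, |f b v| ≤ Set.indicator (Set.Icc (-1:ℝ) 1) (fun _ => c) v := by
    intro b v
    by_cases hv : v ∈ Set.Icc (-1:ℝ) 1
    · rw [Set.indicator_of_mem hv]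
      have h1 : |(if b ≤ y + h * v then (1:ℝ) else 0)| ≤ 1 := by split <;> simp
      calc |f b v| = |(if b ≤ y + h * v then (1:ℝ) else 0)|
            * |v ^ (i:ℕ) / (Nat.factorial i : ℝ) * K v * g (y + h * v)| := by
            rw [hf]; simp only []
            rw [← abs_mul]; ring_nf
        _ ≤ 1 * c := mul_le_mul h1 (hrest v) (abs_nonneg _) (by norm_num)
        _ = c := one_mul c
    · rw [hf]
      simp only [hKsupp v hv, mul_zero, zero_mul, abs_zero]
      exact Set.indicator_nonneg (fun _ _ => hc0) v
  have hmeas : ∀ b, Measurable (f b) := by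
    intro b
    apply Measurable.mul
    apply Measurable.mul
    apply Measurable.mul
    · exact Measurable.ite (measurableSet_le measurable_const (by fun_prop)) measurable_const
        measurable_const
    · fun_prop
    · exact hKm
    · fun_prop
  have hGint : Integrable (Set.indicator (Set.Icc (-1:ℝ) 1) (fun _ => c)) := by
    rw [integrable_indicator_iff measurableSet_Icc]
    exact integrableOn_const (by simp)
  have hInt : ∀ b, IntegrableOn (f b) {v : ℝ | y + h * v ∈ 𝒴} := by
    intro b
    apply Integrable.mono' hGint.integrableOn ((hmeas b).aestronglyMeasurable.restrict)
    exact ae_of_all _ fun v => by rw [Real.norm_eq_abs]; exact hbound b v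
  show |(∫ v in {v : ℝ | y + h * v ∈ 𝒴}, f a v) - ∫ v in {v : ℝ | y + h * v ∈ 𝒴}, f a' v|
      ≤ c / h * |a - a'|
  set A := Set.Ico ((a - y)/h) ((a' - y)/h) with hA
  have hdiff : ∀ v, |f a v - f a' v| ≤ Set.indicator A (fun _ => c) v := by
    intro v
    by_cases h1 : a ≤ y + h * v
    · by_cases h2 : a' ≤ y + h * v
      · rw [hf]; simp only [if_pos h1, if_pos h2, sub_self, abs_zero]
        exact Set.indicator_nonneg (fun _ _ => hc0) v
      · have hv : v ∈ A := by
          constructor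
          · rw [div_le_iff₀ hh]; linarith
          · rw [lt_div_iff₀ hh]; push_neg at h2; linarith
        rw [Set.indicator_of_mem hv]
        rw [hf]; simp only [if_pos h1, if_neg h2]
        have : (1:ℝ) * (v ^ (i:ℕ) / (Nat.factorial (i:ℕ) : ℝ)) * K v * g (y + h * v)
            - 0 * (v ^ (i:ℕ) / (Nat.factorial (i:ℕ) : ℝ)) * K v * g (y + h * v)
            = v ^ (i:ℕ) / (Nat.factorial (i:ℕ) : ℝ) * K v * g (y + h * v) := by ring
        rw [this]; exact hrest v
    · have h2 : ¬ a' ≤ y + h * v := fun h2 => h1 (le_trans hle h2)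
      rw [hf]; simp only [if_neg h1, if_neg h2, sub_self, abs_zero]
      exact Set.indicator_nonneg (fun _ _ => hc0) v
  have hAint : Integrable (Set.indicator A (fun _ => c)) := by
    rw [integrable_indicator_iff measurableSet_Ico]
    exact integrableOn_const (by simp [Real.volume_Ico])
  have hnn : (0:ℝ) ≤ (a' - y)/h - (a - y)/h := by
    rw [div_sub_div_same]
    apply div_nonneg _ hh.le
    linarith
  calc |(∫ v in {v : ℝ | y + h * v ∈ 𝒴}, f a v) - ∫ v in {v : ℝ | y + h * v ∈ 𝒴}, f a' v|
      = |∫ v in {v : ℝ | y + h * v ∈ 𝒴}, (f a v - f a' v)| := by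
        rw [integral_sub (hInt a) (hInt a')]
    _ ≤ ∫ v in {v : ℝ | y + h * v ∈ 𝒴}, |f a v - f a' v| := by
        simpa [Real.norm_eq_abs] using
          norm_integral_le_integral_norm (μ := volume.restrict {v : ℝ | y + h * v ∈ 𝒴})
            (fun v => f a v - f a' v)
    _ ≤ ∫ v in {v : ℝ | y + h * v ∈ 𝒴}, Set.indicator A (fun _ => c) v := by
        apply integral_mono ((hInt a).sub (hInt a')).abs hAint.integrableOn hdiff
    _ ≤ ∫ v, Set.indicator A (fun _ => c) v := by
        apply setIntegral_le_integral hAint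
        exact ae_of_all _ (fun v => Set.indicator_nonneg (fun _ _ => hc0) v)
    _ = ((a' - y)/h - (a - y)/h) * c := by
        rw [integral_indicator_const _ measurableSet_Ico, Real.volume_real_Ico, smul_eq_mul,
          max_eq_left hnn]
    _ = c / h * |a - a'| := by
        rw [abs_sub_comm, abs_of_nonneg (sub_nonneg.2 hle)]
        field_simp
        ring
end
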